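/- Let 0 < r < R be real numbers, z₀ ∈ ℂ, and 0 < m ≤ M. Suppose F is a holomorphic function on an open set containing the closed disc {z : |z − z₀| ≤ R}, that |F(z)| ≤ M for all z with |z − z₀| ≤ R, and that |F(z₀)| ≥ m. Then the set of zeros of F in the closed disc {z : |z − z₀| ≤ r} is finite, and the number of these zeros counted with multiplicity is at most (log M − log m)/log(R/r). -/

import Mathlib

open Metric Filter Complex

/-- Peel off one Blaschke factor. -/
lemma peel_aux (r R : ℝ) (hr : 0 < r) (hrR : r < R) (z₀ z₁ : ℂ)
    (hz₁ : z₁ ∈ Metric.closedBall z₀ r)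
    (F g : ℂ → ℂ) (hF : AnalyticOnNhd ℂ F (Metric.closedBall z₀ R))
    (M : ℝ) (hbd : ∀ w ∈ Metric.closedBall z₀ R, ‖F w‖ ≤ M)
    (k : ℕ) (hg : AnalyticAt ℂ g z₁)
    (hfac : ∀ᶠ w in nhds z₁, F w = (w - z₁) ^ (k + 1) * g w) :
    ∃ F₁ : ℂ → ℂ, AnalyticOnNhd ℂ F₁ (Metric.closedBall z₀ R) ∧
      (∀ w ∈ Metric.closedBall z₀ R, ‖F₁ w‖ ≤ M) ∧
      ‖F z₀‖ ≤ (r / R) * ‖F₁ z₀‖ ∧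
      (∀ w, w ≠ z₁ → F₁ w = F w * (((R : ℂ) ^ 2 - (starRingEnd ℂ) (z₁ - z₀) * (w - z₀)) /
        ((R : ℂ) * (w - z₁)))) ∧
      (∃ g₁ : ℂ → ℂ, AnalyticAt ℂ g₁ z₁ ∧ ∀ᶠ w in nhds z₁, F₁ w = (w - z₁) ^ k * g₁ w) := by
  have hR : (0 : ℝ) < R := hr.trans hrR
  have hRc : (R : ℂ) ≠ 0 := by exact_mod_cast hR.ne'
  set D : ℂ → ℂ := fun w => (R : ℂ) ^ 2 - (starRingEnd ℂ) (z₁ - z₀) * (w - z₀) with hD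
  have hDan : ∀ w : ℂ, AnalyticAt ℂ D w := fun w =>
    analyticAt_const.sub (analyticAt_const.mul ((analyticAt_id).sub analyticAt_const))
  set q : ℂ → ℂ := fun w => if w = z₁ then (0 : ℂ) ^ k * g z₁ else F w / (w - z₁) with hq
  have hFz₁ : F z₁ = 0 := by
    have := hfac.self_of_nhds
    simpa using this
  have hkey : ∀ w, F w = (w - z₁) * q w := by
    intro w
    by_cases hw : w = z₁
    · simp [hw, hq, hFz₁]
    · simp only [hq, if_neg hw]; field_simp
  -- q is analytic at z₁
  have hq_near : q =ᶠ[nhds z₁] fun w => (w - z₁) ^ k * g w := by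
    filter_upwards [hfac] with w hw
    by_cases h : w = z₁
    · simp [h, hq]
    · have hne : w - z₁ ≠ 0 := sub_ne_zero.mpr h
      simp only [hq, if_neg h, hw, pow_succ]
      field_simp
  have hqz₁ : AnalyticAt ℂ q z₁ :=
    ((((analyticAt_id).sub analyticAt_const).pow k).mul hg).congr hq_near.symm
  have hqan : ∀ w ∈ Metric.closedBall z₀ R, AnalyticAt ℂ q w := by
    intro w hw
    by_cases h : w = z₁
    · exact h ▸ hqz₁
    · have hev : (fun w' => F w' / (w' - z₁)) =ᶠ[nhds w] q := by
        filter_upwards [eventually_ne_nhds h] with w' hw'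
        simp [hq, if_neg hw']
      exact ((hF w hw).div ((analyticAt_id).sub analyticAt_const)
        (sub_ne_zero.mpr h)).congr hev
  set F₁ : ℂ → ℂ := fun w => q w * D w / (R : ℂ) with hF₁def
  have hF₁an : AnalyticOnNhd ℂ F₁ (Metric.closedBall z₀ R) := by
    intro w hw
    exact ((hqan w hw).mul (hDan w)).div analyticAt_const hRc
  -- norm identity on sphere
  have hDabs : ∀ w ∈ Metric.sphere z₀ R, ‖D w‖ = R * ‖w - z₁‖ := by
    intro w hw
    have hu : ‖w - z₀‖ = R := by
      simpa [Complex.dist_eq] using (mem_sphere_iff_norm.mp hw)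
    have h1 : (R : ℂ) ^ 2 = (w - z₀) * (starRingEnd ℂ) (w - z₀) := by
      rw [Complex.mul_conj']
      norm_cast
      rw [← hu]
    have h2 : D w = (w - z₀) * (starRingEnd ℂ) (w - z₁) := by
      have h3 : (starRingEnd ℂ) (w - z₁) = (starRingEnd ℂ) (w - z₀) - (starRingEnd ℂ) (z₁ - z₀) := by
        rw [← map_sub]; ring_nf
      rw [hD, h3, h1]; ring
    rw [h2, norm_mul, Complex.norm_conj, hu]
  have hF₁sphere : ∀ w ∈ Metric.sphere z₀ R, ‖F₁ w‖ = ‖F w‖ := by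
    intro w hw
    have : ‖F₁ w‖ = ‖q w‖ * ‖D w‖ / R := by
      simp [hF₁def, map_mul, map_div₀, Complex.norm_real, abs_of_pos hR]
    rw [this, hDabs w hw, hkey w]
    rw [norm_mul]
    field_simp
  -- max modulus
  have hF₁bd : ∀ w ∈ Metric.closedBall z₀ R, ‖F₁ w‖ ≤ M := by
    have hdc : DiffContOnCl ℂ F₁ (Metric.ball z₀ R) := by
      constructor
      · exact fun w hw => (hF₁an w (Metric.ball_subset_closedBall hw)).differentiableAt.differentiableWithinAt
      · rw [closure_ball z₀ hR.ne']
        exact fun w hw => (hF₁an w hw).continuousAt.continuousWithinAt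
    intro w hw
    have := Complex.norm_le_of_forall_mem_frontier_norm_le (Metric.isBounded_ball) hdc
      (fun z hz => by
        rw [frontier_ball z₀ hR.ne'] at hz
        rw [hF₁sphere z hz]
        exact hbd z (Metric.sphere_subset_closedBall hz))
      (z := w) (by rwa [closure_ball z₀ hR.ne'])
    exact this
  -- value at z₀
  have hval : ‖F z₀‖ ≤ (r / R) * ‖F₁ z₀‖ := by
    have hD0 : D z₀ = (R : ℂ) ^ 2 := by simp [hD]
    have hF₁0 : F₁ z₀ = q z₀ * (R : ℂ) := by
      rw [hF₁def]
      simp only [hD0]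
      field_simp
    have h1 : ‖F z₀‖ = ‖z₀ - z₁‖ * ‖q z₀‖ := by
      rw [hkey z₀, norm_mul]
    have h2 : ‖F₁ z₀‖ = ‖q z₀‖ * R := by
      rw [hF₁0, norm_mul]
      simp [Complex.norm_real, abs_of_pos hR]
    rw [h1, h2]
    have habs : ‖z₀ - z₁‖ ≤ r := by
      have := Metric.mem_closedBall.mp hz₁
      rw [Complex.dist_eq] at this
      rwa [← norm_neg, neg_sub]
    calc ‖z₀ - z₁‖ * ‖q z₀‖ ≤ r * ‖q z₀‖ :=
          mul_le_mul_of_nonneg_right habs (norm_nonneg _)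
      _ = (r / R) * (‖q z₀‖ * R) := by field_simp
  -- formula off z₁
  have hform : ∀ w, w ≠ z₁ → F₁ w = F w * (D w / ((R : ℂ) * (w - z₁))) := by
    intro w hw
    have hne : w - z₁ ≠ 0 := sub_ne_zero.mpr hw
    rw [hF₁def]
    simp only [hq, if_neg hw]
    rw [div_mul_eq_mul_div, div_div, ← mul_div_assoc, mul_comm (w - z₁) (R : ℂ)]
  -- local factorization at z₁ for F₁
  refine ⟨F₁, hF₁an, hF₁bd, hval, hform, ⟨fun w => g w * D w / (R : ℂ), (hg.mul (hDan z₁)).div analyticAt_const hRc, ?_⟩⟩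
  filter_upwards [hq_near] with w hw
  simp only [hF₁def, hw]
  ring

/-- Induction on total multiplicity. -/
lemma count_aux (r R : ℝ) (hr : 0 < r) (hrR : r < R) (z₀ : ℂ) (M : ℝ) :
    ∀ (n : ℕ) (F : ℂ → ℂ), AnalyticOnNhd ℂ F (Metric.closedBall z₀ R) →
      (∀ w ∈ Metric.closedBall z₀ R, ‖F w‖ ≤ M) →
      ∀ (Z : Finset ℂ) (mult : ℂ → ℕ), (∀ z ∈ Z, z ∈ Metric.closedBall z₀ r) →
      (∀ z ∈ Z, ∃ g : ℂ → ℂ, AnalyticAt ℂ g z ∧ ∀ᶠ w in nhds z, F w = (w - z) ^ (mult z) * g w) →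
      ∑ z ∈ Z, mult z = n → ‖F z₀‖ ≤ M * (r / R) ^ n := by
  have hR : (0 : ℝ) < R := hr.trans hrR
  intro n
  induction n with
  | zero =>
    intro F hF hbd Z mult _ _ _
    simpa using hbd z₀ (Metric.mem_closedBall_self hR.le)
  | succ n ih =>
    intro F hF hbd Z mult hZr hfacs hsum
    have hex : ∃ z₁ ∈ Z, mult z₁ ≠ 0 := by
      by_contra h
      push_neg at h
      rw [Finset.sum_eq_zero h] at hsum
      exact Nat.succ_ne_zero n hsum.symm
    obtain ⟨z₁, hz₁Z, hz₁m⟩ := hex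
    obtain ⟨k, hk⟩ : ∃ k, mult z₁ = k + 1 := ⟨mult z₁ - 1, (Nat.succ_pred_eq_of_pos (Nat.pos_of_ne_zero hz₁m)).symm⟩
    obtain ⟨g, hg, hfac⟩ := hfacs z₁ hz₁Z
    rw [hk] at hfac
    obtain ⟨F₁, hF₁an, hF₁bd, hval, hform, g₁, hg₁, hfac₁⟩ :=
      peel_aux r R hr hrR z₀ z₁ (hZr z₁ hz₁Z) F g hF M hbd k hg hfac
    set mult' : ℂ → ℕ := Function.update mult z₁ k with hmult'
    have hfacs' : ∀ z ∈ Z, ∃ g : ℂ → ℂ, AnalyticAt ℂ g z ∧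
        ∀ᶠ w in nhds z, F₁ w = (w - z) ^ (mult' z) * g w := by
      intro z hz
      by_cases h : z = z₁
      · subst h
        refine ⟨g₁, hg₁, ?_⟩
        simpa [hmult', Function.update_self] using hfac₁
      · obtain ⟨g', hg', hfac'⟩ := hfacs z hz
        have hRc : (R : ℂ) ≠ 0 := by exact_mod_cast hR.ne'
        refine ⟨fun w => g' w * (((R : ℂ) ^ 2 - (starRingEnd ℂ) (z₁ - z₀) * (w - z₀)) /
          ((R : ℂ) * (w - z₁))), hg'.mul ((analyticAt_const.sub
            (analyticAt_const.mul ((analyticAt_id).sub analyticAt_const))).div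
            (analyticAt_const.mul ((analyticAt_id).sub analyticAt_const))
            (by simpa [sub_ne_zero] using mul_ne_zero hRc (sub_ne_zero.mpr h))), ?_⟩
        filter_upwards [hfac', eventually_ne_nhds h] with w hw hwne
        rw [hform w hwne, hw, hmult', Function.update_of_ne h]
        ring
    have hsum' : ∑ z ∈ Z, mult' z = n := by
      have h1 := Finset.add_sum_erase Z mult hz₁Z
      have h2 : ∑ z ∈ Z, mult' z = k + ∑ z ∈ Z.erase z₁, mult' z := by
        rw [← Finset.add_sum_erase Z mult' hz₁Z, hmult', Function.update_self]
      have h3 : ∑ z ∈ Z.erase z₁, mult' z = ∑ z ∈ Z.erase z₁, mult z :=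
        Finset.sum_congr rfl fun z hz => by
          rw [hmult', Function.update_of_ne (Finset.ne_of_mem_erase hz)]
      rw [h2, h3]
      omega
    have hIH := ih F₁ hF₁an hF₁bd Z mult' hZr hfacs' hsum'
    calc ‖F z₀‖ ≤ (r / R) * ‖F₁ z₀‖ := hval
      _ ≤ (r / R) * (M * (r / R) ^ n) :=
          mul_le_mul_of_nonneg_left hIH (div_nonneg hr.le hR.le)
      _ = M * (r / R) ^ (n + 1) := by ring

/-- **Jensen-type zero counting bound.**
If `F` is holomorphic on an open set containing the closed disc of radius `R` around `z₀`,
`|F| ≤ M` on that disc, and `|F z₀| ≥ m > 0`, then the zeros of `F` in the closed disc of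
radius `r < R` form a finite set, and their number counted with multiplicity is at most
`(log M - log m) / log (R / r)`. Multiplicity of a zero `z` is the analytic order, i.e. the
natural number `k` such that `F w = (w - z) ^ k * g w` near `z` with `g` analytic, `g z ≠ 0`. -/
theorem stmt0 (r R : ℝ) (hr : 0 < r) (hrR : r < R) (z₀ : ℂ) (m M : ℝ)
    (hm : 0 < m) (hmM : m ≤ M) (F : ℂ → ℂ) (s : Set ℂ) (hs : IsOpen s)
    (hsub : Metric.closedBall z₀ R ⊆ s) (hF : DifferentiableOn ℂ F s)
    (hbd : ∀ z ∈ Metric.closedBall z₀ R, ‖F z‖ ≤ M)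
    (hlow : m ≤ ‖F z₀‖) :
    ∃ Z : Finset ℂ,
      (∀ z : ℂ, z ∈ Z ↔ z ∈ Metric.closedBall z₀ r ∧ F z = 0) ∧
      ∀ mult : ℂ → ℕ,
        (∀ z ∈ Z, ∃ g : ℂ → ℂ, AnalyticAt ℂ g z ∧ g z ≠ 0 ∧
          ∀ᶠ w in nhds z, F w = (w - z) ^ (mult z) * g w) →
        (∑ z ∈ Z, (mult z : ℝ)) ≤ (Real.log M - Real.log m) / Real.log (R / r) := by
  have hR : (0 : ℝ) < R := hr.trans hrR
  have hMpos : (0 : ℝ) < M := hm.trans_le hmM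
  have hana : AnalyticOnNhd ℂ F s := hF.analyticOnNhd hs
  have hanaCB : AnalyticOnNhd ℂ F (Metric.closedBall z₀ R) := fun z hz => hana z (hsub hz)
  have hanaB : AnalyticOnNhd ℂ F (Metric.ball z₀ R) :=
    fun z hz => hanaCB z (Metric.ball_subset_closedBall hz)
  have hFz₀ : F z₀ ≠ 0 := by
    intro h
    rw [h] at hlow
    simp at hlow
    exact absurd hlow (not_le.mpr hm)
  have hz₀mem : z₀ ∈ Metric.ball z₀ R := Metric.mem_ball_self hR
  -- finiteness of the zero set
  set K : Set ℂ := {z | z ∈ Metric.closedBall z₀ r ∧ F z = 0} with hK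
  have hKfin : K.Finite := by
    by_contra hinf
    have hinf' : K.Infinite := hinf
    obtain ⟨x, hxK, hacc⟩ := hinf'.exists_accPt_of_subset_isCompact
      (isCompact_closedBall z₀ r) (fun z hz => hz.1)
    have hfreq : ∃ᶠ w in nhdsWithin x {x}ᶜ, F w = 0 := by
      rw [frequently_nhdsWithin_iff]
      exact (accPt_iff_frequently.mp hacc).mono fun w hw => ⟨hw.2.2, hw.1⟩
    have heq := hanaB.eqOn_zero_of_preconnected_of_frequently_eq_zero
      (convex_ball z₀ R).isPreconnected
      (Metric.closedBall_subset_ball hrR hxK) hfreq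
    exact hFz₀ (heq hz₀mem)
  refine ⟨hKfin.toFinset, fun z => by simp [hK, Set.Finite.mem_toFinset], ?_⟩
  intro mult hmult
  set n : ℕ := ∑ z ∈ hKfin.toFinset, mult z with hn
  have hkey : ‖F z₀‖ ≤ M * (r / R) ^ n := by
    refine count_aux r R hr hrR z₀ M n F hanaCB (fun w hw => hbd w hw) hKfin.toFinset mult
      (fun z hz => (hKfin.mem_toFinset.mp hz).1) (fun z hz => ?_) rfl
    obtain ⟨g, hg, _, hfac⟩ := hmult z hz
    exact ⟨g, hg, hfac⟩
  have hmle : m ≤ M * (r / R) ^ n := le_trans hlow hkey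
  have hrR1 : (0 : ℝ) < r / R := div_pos hr hR
  have hlog1 : 0 < Real.log (R / r) := Real.log_pos ((one_lt_div hr).mpr hrR)
  have hlogs : Real.log m ≤ Real.log M + (n : ℝ) * Real.log (r / R) := by
    calc Real.log m ≤ Real.log (M * (r / R) ^ n) := Real.log_le_log hm hmle
      _ = Real.log M + (n : ℝ) * Real.log (r / R) := by
          rw [Real.log_mul hMpos.ne' (pow_ne_zero n hrR1.ne'), Real.log_pow]
  have hneg : Real.log (r / R) = -Real.log (R / r) := by
    rw [Real.log_div hr.ne' hR.ne', Real.log_div hR.ne' hr.ne']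
    ring
  rw [hneg] at hlogs
  have hfinal : (n : ℝ) ≤ (Real.log M - Real.log m) / Real.log (R / r) := by
    rw [le_div_iff₀ hlog1]
    nlinarith
  calc (∑ z ∈ hKfin.toFinset, (mult z : ℝ)) = (n : ℝ) := by rw [hn]; push_cast; ring
    _ ≤ _ := hfinal
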